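/- Let G₁=(V₁,E₁), G₂=(V₂,E₂) be locally finite simple graphs and (x,y) ∈ V₁×V₂. For any function F:V₁×V₂→ℝ, writing F_y(·)=F(·,y) and F^x(·)=F(x,·), the Γ₂ operator on the Cartesian product G₁×G₂ satisfies Γ₂(F)(x,y) = Γ₂(F_y)(x) + Γ₂(F^x)(y) + (1/2) Σ_{x_i~x} Σ_{y_k~y} (F(x_i,y_k) - F(x,y_k) - F(x_i,y) + F(x,y))². -/

import Mathlib

open Finset Filter Topology ENNReal SimpleGraph

noncomputable instance (priority := low) finLocFin {V : Type*} [Finite V] (G : SimpleGraph V) :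
    G.LocallyFinite := fun _ => Fintype.ofFinite _

/-- Non-normalized graph Laplacian. -/
noncomputable def lap {V : Type*} (G : SimpleGraph V) [G.LocallyFinite] (f : V → ℝ) (x : V) : ℝ :=
  ∑ y ∈ G.neighborFinset x, (f y - f x)

/-- Bakry–Émery Γ operator. -/
noncomputable def gam {V : Type*} (G : SimpleGraph V) [G.LocallyFinite] (f g : V → ℝ) (x : V) : ℝ :=
  (lap G (fun v => f v * g v) x - f x * lap G g x - g x * lap G f x) / 2

/-- Bakry–Émery Γ₂ operator. -/
noncomputable def gam2 {V : Type*} (G : SimpleGraph V) [G.LocallyFinite] (f g : V → ℝ) (x : V) : ℝ :=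
  (lap G (gam G f g) x - gam G f (lap G g) x - gam G (lap G f) g x) / 2

/-- The coefficient 1/N for N ∈ (0,∞], with 1/∞ = 0. -/
noncomputable def invN (N : ℝ≥0∞) : ℝ := (N⁻¹).toReal

/-- The vertex `x` satisfies the curvature-dimension inequality CD(K,N). -/
def CD {V : Type*} (G : SimpleGraph V) [G.LocallyFinite] (K : ℝ) (N : ℝ≥0∞) (x : V) : Prop :=
  ∀ f : V → ℝ, gam2 G f f x ≥ invN N * (lap G f x) ^ 2 + K * gam G f f x

section Auxiliary

lemma lap_add {V : Type*} (G : SimpleGraph V) [G.LocallyFinite] (f g : V → ℝ) (x : V) :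
    lap G (fun v => f v + g v) x = lap G f x + lap G g x := by
  unfold lap
  rw [← Finset.sum_add_distrib]
  exact Finset.sum_congr rfl fun z _ => by ring

lemma gam_eq {V : Type*} (G : SimpleGraph V) [G.LocallyFinite] (f g : V → ℝ) (x : V) :
    gam G f g x = (∑ z ∈ G.neighborFinset x, (f z - f x) * (g z - g x)) / 2 := by
  unfold gam lap
  rw [Finset.mul_sum, Finset.mul_sum, ← Finset.sum_sub_distrib, ← Finset.sum_sub_distrib]
  congr 1
  exact Finset.sum_congr rfl fun z _ => by ring

lemma gam_symm {V : Type*} (G : SimpleGraph V) [G.LocallyFinite] (f g : V → ℝ) (x : V) :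
    gam G f g x = gam G g f x := by
  rw [gam_eq, gam_eq]
  congr 1
  exact Finset.sum_congr rfl fun z _ => by ring

lemma gam_add_right {V : Type*} (G : SimpleGraph V) [G.LocallyFinite] (f g h : V → ℝ) (x : V) :
    gam G f (fun v => g v + h v) x = gam G f g x + gam G f h x := by
  rw [gam_eq, gam_eq, gam_eq, ← add_div, ← Finset.sum_add_distrib]
  congr 1
  exact Finset.sum_congr rfl fun z _ => by ring

lemma lap_box {V₁ V₂ : Type*} (G : SimpleGraph V₁) (H : SimpleGraph V₂)
    [G.LocallyFinite] [H.LocallyFinite] [(G.boxProd H).LocallyFinite]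
    (F : V₁ × V₂ → ℝ) (x : V₁) (y : V₂) :
    lap (G.boxProd H) F (x, y) =
      lap G (fun u => F (u, y)) x + lap H (fun v => F (x, v)) y := by
  unfold lap
  rw [SimpleGraph.neighborFinset_boxProd (x, y), Finset.sum_disjUnion,
    Finset.sum_product, Finset.sum_product]
  simp

lemma gam_box {V₁ V₂ : Type*} (G : SimpleGraph V₁) (H : SimpleGraph V₂)
    [G.LocallyFinite] [H.LocallyFinite] [(G.boxProd H).LocallyFinite]
    (F F' : V₁ × V₂ → ℝ) (x : V₁) (y : V₂) :
    gam (G.boxProd H) F F' (x, y) =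
      gam G (fun u => F (u, y)) (fun u => F' (u, y)) x +
      gam H (fun v => F (x, v)) (fun v => F' (x, v)) y := by
  unfold gam
  rw [lap_box, lap_box, lap_box]
  ring

lemma key {V₁ V₂ : Type*} (S1 : Finset V₁) (S2 : Finset V₂)
    (d : V₁ → V₂ → ℝ) (b : V₁ → ℝ) (c : V₂ → ℝ) (a : ℝ) :
    ((∑ i ∈ S1, ((∑ k ∈ S2, (d i k - b i) * (d i k - b i)) / 2 -
        (∑ k ∈ S2, (c k - a) * (c k - a)) / 2)
      - 2 * ((∑ i ∈ S1, (b i - a) *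
          ((∑ k ∈ S2, (d i k - b i)) - ∑ k ∈ S2, (c k - a))) / 2))
     + ((∑ k ∈ S2, ((∑ i ∈ S1, (d i k - c k) * (d i k - c k)) / 2 -
        (∑ i ∈ S1, (b i - a) * (b i - a)) / 2)
      - 2 * ((∑ k ∈ S2, (c k - a) *
          ((∑ i ∈ S1, (d i k - c k)) - ∑ i ∈ S1, (b i - a))) / 2)))) / 2
    = (1 / 2) * ∑ i ∈ S1, ∑ k ∈ S2, (d i k - c k - b i + a) ^ 2 := by
  have e1 : ∑ i ∈ S1, ((∑ k ∈ S2, (d i k - b i) * (d i k - b i)) / 2 -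
      (∑ k ∈ S2, (c k - a) * (c k - a)) / 2)
      = ∑ i ∈ S1, ∑ k ∈ S2,
        ((d i k - b i) * (d i k - b i) - (c k - a) * (c k - a)) / 2 := by
    refine Finset.sum_congr rfl fun i _ => ?_
    rw [div_sub_div_same, ← Finset.sum_sub_distrib, Finset.sum_div]
  have e2 : ∑ i ∈ S1, (b i - a) * ((∑ k ∈ S2, (d i k - b i)) - ∑ k ∈ S2, (c k - a))
      = ∑ i ∈ S1, ∑ k ∈ S2, (b i - a) * ((d i k - b i) - (c k - a)) := by
    refine Finset.sum_congr rfl fun i _ => ?_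
    rw [← Finset.sum_sub_distrib, Finset.mul_sum]
  have e3 : ∑ k ∈ S2, ((∑ i ∈ S1, (d i k - c k) * (d i k - c k)) / 2 -
      (∑ i ∈ S1, (b i - a) * (b i - a)) / 2)
      = ∑ i ∈ S1, ∑ k ∈ S2,
        ((d i k - c k) * (d i k - c k) - (b i - a) * (b i - a)) / 2 := by
    rw [Finset.sum_comm]
    refine Finset.sum_congr rfl fun k _ => ?_
    rw [div_sub_div_same, ← Finset.sum_sub_distrib, Finset.sum_div]
  have e4 : ∑ k ∈ S2, (c k - a) * ((∑ i ∈ S1, (d i k - c k)) - ∑ i ∈ S1, (b i - a))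
      = ∑ i ∈ S1, ∑ k ∈ S2, (c k - a) * ((d i k - c k) - (b i - a)) := by
    rw [Finset.sum_comm]
    refine Finset.sum_congr rfl fun k _ => ?_
    rw [← Finset.sum_sub_distrib, Finset.mul_sum]
  rw [e1, e2, e3, e4]
  have h2 : ∀ E : ℝ, 2 * (E / 2) = E := fun E => by ring
  rw [h2, h2]
  simp only [← Finset.sum_sub_distrib, ← Finset.sum_add_distrib]
  rw [Finset.mul_sum, Finset.sum_div]
  refine Finset.sum_congr rfl fun i _ => ?_
  rw [Finset.mul_sum, Finset.sum_div]
  refine Finset.sum_congr rfl fun k _ => ?_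
  ring

lemma cross {V₁ V₂ : Type*} (G : SimpleGraph V₁) (H : SimpleGraph V₂)
    [G.LocallyFinite] [H.LocallyFinite]
    (F : V₁ × V₂ → ℝ) (x : V₁) (y : V₂) :
    (lap G (fun v => gam H (fun w => F (v, w)) (fun w => F (v, w)) y) x
      - 2 * gam G (fun u => F (u, y)) (fun v => lap H (fun w => F (v, w)) y) x
      + (lap H (fun v => gam G (fun u => F (u, v)) (fun u => F (u, v)) x) y
      - 2 * gam H (fun v => F (x, v)) (fun v => lap G (fun u => F (u, v)) x) y)) / 2
    = (1 / 2) * ∑ xi ∈ G.neighborFinset x, ∑ yk ∈ H.neighborFinset y,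
        (F (xi, yk) - F (x, yk) - F (xi, y) + F (x, y)) ^ 2 := by
  simp only [gam_eq, lap]
  exact key (G.neighborFinset x) (H.neighborFinset y)
    (fun i k => F (i, k)) (fun i => F (i, y)) (fun k => F (x, k)) (F (x, y))

end Auxiliary

theorem stmt_16 {V₁ V₂ : Type*} (G : SimpleGraph V₁) (H : SimpleGraph V₂)
    [G.LocallyFinite] [H.LocallyFinite] [(G.boxProd H).LocallyFinite]
    (F : V₁ × V₂ → ℝ) (x : V₁) (y : V₂) :
    gam2 (G.boxProd H) F F (x, y) =
      gam2 G (fun u => F (u, y)) (fun u => F (u, y)) x +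
      gam2 H (fun v => F (x, v)) (fun v => F (x, v)) y +
      (1 / 2) * ∑ xi ∈ G.neighborFinset x, ∑ yk ∈ H.neighborFinset y,
        (F (xi, yk) - F (x, yk) - F (xi, y) + F (x, y)) ^ 2 := by
  unfold gam2
  rw [gam_symm (G.boxProd H) (lap (G.boxProd H) F) F (x, y)]
  rw [gam_symm G (lap G (fun u => F (u, y))) (fun u => F (u, y)) x]
  rw [gam_symm H (lap H (fun v => F (x, v))) (fun v => F (x, v)) y]
  rw [lap_box G H (gam (G.boxProd H) F F) x y]
  rw [gam_box G H F (lap (G.boxProd H) F) x y]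
  simp only [gam_box, lap_box, lap_add, gam_add_right]
  have hc := cross G H F x y
  linarith [hc]
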